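/- arXiv:2509.06003 — 15 statements merged into one kernel-verified Lean document; each statement's English description precedes it below -/
import Mathlib

section
/- Let G be a finite simple graph and let k, p ≥ 2 be integers with p dividing k. If G admits a neighborhood-balanced k-coloring, then G admits a neighborhood-balanced p-coloring. -/
open SimpleGraph

/-- A neighborhood-balanced `k`-coloring of a simple graph `G` is a vertex coloring
`c : V → Fin k` such that every vertex has an equal number of neighbors of each color. -/
def IsNBC {V : Type*} (G : SimpleGraph V) (k : ℕ) (c : V → Fin k) : Prop :=
  ∀ v : V, ∀ i j : Fin k,
    {u | G.Adj v u ∧ c u = i}.ncard = {u | G.Adj v u ∧ c u = j}.ncard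

lemma count_mod_range (k p r : ℕ) (hp : 0 < p) (hdvd : p ∣ k) (hr : r < p) :
    ((Finset.range k).filter (fun j => j % p = r)).card = k / p := by
  rw [← Finset.card_range (k / p)]
  apply Finset.card_bij' (fun j _ => j / p) (fun i _ => p * i + r)
  · intro j hj
    simp only [Finset.mem_filter, Finset.mem_range] at hj ⊢
    exact Nat.div_lt_div_of_lt_of_dvd hdvd hj.1
  · intro i hi
    simp only [Finset.mem_range] at hi
    simp only [Finset.mem_filter, Finset.mem_range]
    constructor
    · calc p * i + r < p * i + p := by omega
        _ = p * (i + 1) := by ring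
        _ ≤ p * (k / p) := Nat.mul_le_mul_left p hi
        _ = k := Nat.mul_div_cancel' hdvd
    · rw [Nat.mul_add_mod, Nat.mod_eq_of_lt hr]
  · intro j hj
    simp only [Finset.mem_filter, Finset.mem_range] at hj
    rw [← hj.2]
    exact Nat.div_add_mod j p
  · intro i hi
    rw [Nat.mul_add_div hp, Nat.div_eq_of_lt hr]; omega

theorem stmt_2 {V : Type*} [Fintype V] (G : SimpleGraph V)
    (k p : ℕ) (hk : 2 ≤ k) (hp : 2 ≤ p) (hdvd : p ∣ k)
    (h : ∃ c : V → Fin k, IsNBC G k c) :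
    ∃ c : V → Fin p, IsNBC G p c := by
  classical
  obtain ⟨c, hc⟩ := h
  have hp0 : 0 < p := by omega
  have hk0 : 0 < k := by omega
  refine ⟨fun v => ⟨(c v).val % p, Nat.mod_lt _ hp0⟩, ?_⟩
  intro v i j
  -- express each set as a coe of a Finset
  have key : ∀ r : Fin p,
      {u | G.Adj v u ∧ (⟨(c u).val % p, Nat.mod_lt _ hp0⟩ : Fin p) = r}.ncard =
      (k / p) * {u | G.Adj v u ∧ c u = (⟨0, hk0⟩ : Fin k)}.ncard := by
    intro r
    have hset : ∀ m : Fin k, {u | G.Adj v u ∧ c u = m} =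
        ↑(Finset.univ.filter fun u => G.Adj v u ∧ c u = m) := by
      intro m; ext u; simp
    have hcard : ∀ m : Fin k,
        (Finset.univ.filter fun u => G.Adj v u ∧ c u = m).card =
        (Finset.univ.filter fun u => G.Adj v u ∧ c u = (⟨0, hk0⟩ : Fin k)).card := by
      intro m
      have := hc v m ⟨0, hk0⟩
      rwa [hset m, hset ⟨0, hk0⟩, Set.ncard_coe_finset, Set.ncard_coe_finset] at this
    have hset2 : {u | G.Adj v u ∧ (⟨(c u).val % p, Nat.mod_lt _ hp0⟩ : Fin p) = r} =
        ↑(Finset.univ.filter fun u => G.Adj v u ∧ (c u).val % p = r.val) := by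
      ext u
      simp only [Set.mem_setOf_eq, Finset.coe_filter, Finset.mem_univ, true_and,
        Fin.ext_iff]
    rw [hset2, Set.ncard_coe_finset, hset ⟨0, hk0⟩, Set.ncard_coe_finset]
    have hbi : (Finset.univ.filter fun u => G.Adj v u ∧ (c u).val % p = r.val) =
        (Finset.univ.filter fun m : Fin k => m.val % p = r.val).biUnion
          (fun m => Finset.univ.filter fun u => G.Adj v u ∧ c u = m) := by
      ext u
      simp only [Finset.mem_filter, Finset.mem_univ, true_and, Finset.mem_biUnion]
      constructor
      · rintro ⟨ha, hm⟩; exact ⟨c u, ⟨hm, ha, rfl⟩⟩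
      · rintro ⟨m, hm, ha, rfl⟩; exact ⟨ha, hm⟩
    rw [hbi, Finset.card_biUnion]
    · rw [Finset.sum_congr rfl (fun m _ => hcard m), Finset.sum_const, smul_eq_mul]
      congr 1
      -- count of Fin k elements with val % p = r.val is k / p
      have : (Finset.univ.filter fun m : Fin k => m.val % p = r.val).card =
          ((Finset.range k).filter fun m => m % p = r.val).card := by
        rw [Finset.card_filter, Finset.card_filter,
          ← Fin.sum_univ_eq_sum_range (fun m => if m % p = r.val then 1 else 0)]
      rw [this, count_mod_range k p r.val hp0 hdvd r.isLt]
    · intro a _ b _ hab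
      simp only [Finset.disjoint_left, Finset.mem_filter, Finset.mem_univ, true_and]
      rintro u ⟨_, rfl⟩ ⟨_, h2⟩
      exact hab h2
  rw [key i, key j]
end

section
/- Let G be a finite simple graph, k ≥ 2 an integer, and c a neighborhood-balanced k-coloring of G with color classes V_1, …, V_k. Then for any two distinct colors i ≠ j, k² times the number of edges of G with one endpoint in V_i and the other in V_j equals 2·|E(G)|, and for any color i, k² times the number of edges of G with both endpoints in V_i equals |E(G)|. -/
open SimpleGraph Finset

section Aux
variable {V : Type*} [Fintype V] [DecidableEq V] (G : SimpleGraph V) [DecidableRel G.Adj]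
  {k : ℕ} (c : V → Fin k)

private def Nb (v : V) (i : Fin k) : Finset V :=
  Finset.univ.filter (fun u => G.Adj v u ∧ c u = i)

private def Pr (i j : Fin k) : Finset (V × V) :=
  Finset.univ.filter (fun p => G.Adj p.1 p.2 ∧ c p.1 = i ∧ c p.2 = j)

lemma nb_card (h : IsNBC G k c) (v : V) (i j : Fin k) :
    (Nb G c v i).card = (Nb G c v j).card := by
  have h' := h v i j
  have e : ∀ l : Fin k, {u | G.Adj v u ∧ c u = l} = ↑(Nb G c v l) := by
    intro l; ext u; simp [Nb]
  rwa [e i, e j, Set.ncard_coe_finset, Set.ncard_coe_finset] at h'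

lemma deg_eq (h : IsNBC G k c) (v : V) (i : Fin k) :
    G.degree v = k * (Nb G c v i).card := by
  have e1 : G.neighborFinset v = Finset.univ.filter (fun u => G.Adj v u) := by
    ext u; simp
  rw [← card_neighborFinset_eq_degree, e1,
    Finset.card_eq_sum_card_fiberwise (f := c) (t := Finset.univ) (fun x _ => mem_univ _)]
  have e2 : ∀ b : Fin k, ((Finset.univ.filter (fun u => G.Adj v u)).filter
      (fun u => c u = b)).card = (Nb G c v i).card := by
    intro b
    rw [Finset.filter_filter]
    exact nb_card G c h v b i
  rw [Finset.sum_congr rfl (fun b _ => e2 b), Finset.sum_const, Finset.card_univ,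
    Fintype.card_fin, smul_eq_mul]

lemma pr_card (i j : Fin k) :
    (Pr G c i j).card = ∑ v ∈ Finset.univ.filter (fun v => c v = i), (Nb G c v j).card := by
  rw [Finset.card_eq_sum_card_fiberwise (f := Prod.fst)
    (t := Finset.univ.filter (fun v => c v = i))
    (fun p hp => by simp only [Pr, mem_filter, Finset.mem_coe] at hp ⊢; exact ⟨mem_univ _, hp.2.2.1⟩)]
  refine Finset.sum_congr rfl fun v hv => ?_
  simp only [mem_filter] at hv
  have e : (Pr G c i j).filter (fun p => p.1 = v) = (Nb G c v j).image (fun u => (v, u)) := by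
    ext ⟨a, b⟩
    simp only [Pr, Nb, mem_filter, mem_univ, true_and, mem_image, Prod.mk.injEq]
    constructor
    · rintro ⟨⟨hadj, hci, hcj⟩, rfl⟩
      exact ⟨b, ⟨hadj, hcj⟩, rfl, rfl⟩
    · rintro ⟨u, ⟨hadj, hcj⟩, rfl, rfl⟩
      exact ⟨⟨hadj, hv.2, hcj⟩, rfl⟩
  rw [e, Finset.card_image_of_injective _ (fun a b hab => by simpa using hab)]

lemma pr_swap (i j : Fin k) : (Pr G c i j).card = (Pr G c j i).card := by
  refine Finset.card_nbij' Prod.swap Prod.swap ?_ ?_ (fun _ _ => by simp) (fun _ _ => by simp)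
  · rintro ⟨a, b⟩ hp
    simp only [Pr, Finset.mem_coe, mem_filter, mem_univ, true_and] at hp ⊢
    exact ⟨hp.1.symm, hp.2.2, hp.2.1⟩
  · rintro ⟨a, b⟩ hp
    simp only [Pr, Finset.mem_coe, mem_filter, mem_univ, true_and] at hp ⊢
    exact ⟨hp.1.symm, hp.2.2, hp.2.1⟩

lemma pr_ne (i j : Fin k) (hij : i ≠ j) :
    (Pr G c i j).card = (G.edgeFinset.filter (fun e => Sym2.map c e = s(i, j))).card := by
  refine Finset.card_bij (fun p _ => s(p.1, p.2)) ?_ ?_ ?_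
  · rintro ⟨a, b⟩ hp
    simp only [Pr, mem_filter, mem_univ, true_and] at hp
    simp only [mem_filter, mem_edgeFinset, mem_edgeSet, Sym2.map_pair_eq]
    exact ⟨hp.1, by rw [hp.2.1, hp.2.2]⟩
  · rintro ⟨a, b⟩ ha ⟨a', b'⟩ hb he
    simp only [Pr, mem_filter, mem_univ, true_and] at ha hb
    rw [Sym2.eq_iff] at he
    rcases he with ⟨rfl, rfl⟩ | ⟨rfl, rfl⟩
    · rfl
    · exact absurd (ha.2.1 ▸ hb.2.2) hij
  · intro e he
    simp only [mem_filter, mem_edgeFinset, mem_edgeSet] at he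
    induction e using Sym2.ind with
    | _ a b =>
      rw [Sym2.map_pair_eq, Sym2.eq_iff, mem_edgeSet] at he
      rcases he.2 with ⟨ha, hb⟩ | ⟨ha, hb⟩
      · exact ⟨(a, b), by simp [Pr, he.1, ha, hb], rfl⟩
      · exact ⟨(b, a), by simp [Pr, he.1.symm, ha, hb], Sym2.eq_swap⟩

lemma pr_eq (i : Fin k) :
    (Pr G c i i).card = 2 * (G.edgeFinset.filter (fun e => Sym2.map c e = s(i, i))).card := by
  rw [Finset.card_eq_sum_card_fiberwise (f := fun p => s(p.1, p.2))
    (t := G.edgeFinset.filter (fun e => Sym2.map c e = s(i, i)))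
    (fun p hp => by
      simp only [Pr, Finset.mem_coe, mem_filter, mem_univ, true_and] at hp
      simp only [Finset.mem_coe, mem_filter, mem_edgeFinset, mem_edgeSet, Sym2.map_pair_eq]
      exact ⟨hp.1, by rw [hp.2.1, hp.2.2]⟩)]
  rw [Finset.sum_congr rfl (fun e he => ?_), Finset.sum_const, smul_eq_mul, mul_comm]
  simp only [mem_filter, mem_edgeFinset, mem_edgeSet] at he
  induction e using Sym2.ind with
  | _ a b =>
    rw [Sym2.map_pair_eq, Sym2.eq_iff, mem_edgeSet] at he
    have hab : a ≠ b := G.ne_of_adj he.1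
    have hca : c a = i := by rcases he.2 with ⟨h1, _⟩ | ⟨h1, _⟩ <;> exact h1
    have hcb : c b = i := by rcases he.2 with ⟨_, h2⟩ | ⟨_, h2⟩ <;> exact h2
    have : (Pr G c i i).filter (fun p => s(p.1, p.2) = s(a, b)) = {(a, b), (b, a)} := by
      ext ⟨x, y⟩
      simp only [Pr, mem_filter, mem_univ, true_and, mem_insert, mem_singleton,
        Prod.mk.injEq, Sym2.eq_iff]
      constructor
      · rintro ⟨-, ⟨rfl, rfl⟩ | ⟨rfl, rfl⟩⟩
        · exact Or.inl ⟨rfl, rfl⟩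
        · exact Or.inr ⟨rfl, rfl⟩
      · rintro (⟨rfl, rfl⟩ | ⟨rfl, rfl⟩)
        · exact ⟨⟨he.1, hca, hcb⟩, Or.inl ⟨rfl, rfl⟩⟩
        · exact ⟨⟨he.1.symm, hcb, hca⟩, Or.inr ⟨rfl, rfl⟩⟩
    rw [this, Finset.card_insert_of_notMem (by simp [hab]), Finset.card_singleton]

private def Dsum (i : Fin k) : ℕ := ∑ v ∈ Finset.univ.filter (fun v => c v = i), G.degree v

lemma dsum_eq (h : IsNBC G k c) (i j : Fin k) :
    Dsum G c i = k * (Pr G c i j).card := by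
  rw [Dsum, pr_card, Finset.mul_sum]
  exact Finset.sum_congr rfl fun v _ => deg_eq G c h v j

lemma dsum_const (h : IsNBC G k c) (i l : Fin k) : Dsum G c l = Dsum G c i := by
  rcases eq_or_ne l i with rfl | hne
  · rfl
  · rw [dsum_eq G c h l i, pr_swap, ← dsum_eq G c h i l]

lemma k_dsum (h : IsNBC G k c) (i : Fin k) :
    k * Dsum G c i = 2 * G.edgeFinset.card := by
  have e1 : ∑ l : Fin k, Dsum G c l = ∑ v, G.degree v := by
    simp only [Dsum]
    exact Finset.sum_fiberwise _ _ _
  have e2 : ∑ l : Fin k, Dsum G c l = k * Dsum G c i := by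
    rw [Finset.sum_congr rfl (fun l _ => dsum_const G c h i l), Finset.sum_const,
      Finset.card_univ, Fintype.card_fin, smul_eq_mul]
  rw [← e2, e1, G.sum_degrees_eq_twice_card_edges]

end Aux

theorem stmt_3 {V : Type*} [Fintype V] [DecidableEq V] (G : SimpleGraph V)
    [DecidableRel G.Adj] (k : ℕ) (hk : 2 ≤ k) (c : V → Fin k) (h : IsNBC G k c) :
    (∀ i j : Fin k, i ≠ j →
      k ^ 2 * (G.edgeFinset.filter (fun e => Sym2.map c e = s(i, j))).card
        = 2 * G.edgeFinset.card) ∧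
    (∀ i : Fin k,
      k ^ 2 * (G.edgeFinset.filter (fun e => Sym2.map c e = s(i, i))).card
        = G.edgeFinset.card) := by
  constructor
  · intro i j hij
    rw [← pr_ne G c i j hij, pow_two, mul_assoc, ← dsum_eq G c h i j, k_dsum G c h i]
  · intro i
    have key : k * Dsum G c i = 2 * G.edgeFinset.card := k_dsum G c h i
    rw [dsum_eq G c h i i, pr_eq G c i] at key
    refine Nat.eq_of_mul_eq_mul_left (show 0 < 2 by norm_num) ?_
    calc 2 * (k ^ 2 * (G.edgeFinset.filter (fun e => Sym2.map c e = s(i, i))).card)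
        = k * (k * (2 * (G.edgeFinset.filter (fun e => Sym2.map c e = s(i, i))).card)) := by ring
      _ = 2 * G.edgeFinset.card := key
end

section
/- Let G be a finite simple r-regular graph, k ≥ 2 an integer, and c a neighborhood-balanced k-coloring of G with color classes V_1, …, V_k. If r ≥ 1, then k·|V_i| = |V(G)| for every color i. -/
open SimpleGraph

theorem stmt_4 {V : Type*} [Fintype V] [DecidableEq V] (G : SimpleGraph V)
    [DecidableRel G.Adj] (r k : ℕ) (hr : 1 ≤ r) (hreg : G.IsRegularOfDegree r)
    (hk : 2 ≤ k) (c : V → Fin k) (h : IsNBC G k c) :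
    ∀ i : Fin k, k * (Finset.univ.filter (fun v => c v = i)).card = Fintype.card V := by
  classical
  intro i
  set f : V → Fin k → ℕ :=
    fun v j => (Finset.univ.filter (fun u => G.Adj v u ∧ c u = j)).card with hf
  have hset : ∀ v j, {u | G.Adj v u ∧ c u = j}.ncard = f v j := by
    intro v j
    have : {u | G.Adj v u ∧ c u = j} =
        ↑(Finset.univ.filter (fun u => G.Adj v u ∧ c u = j)) := by
      ext u; simp
    rw [this, Set.ncard_coe_finset]
  have hcard : ∀ v j, f v j = f v i := by
    intro v j
    have := h v j i
    rwa [hset, hset] at this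
  -- sum over colors of f v j = degree v = r
  have hsum : ∀ v : V, ∑ j : Fin k, f v j = r := by
    intro v
    have hpart : (G.neighborFinset v).card =
        ∑ j : Fin k, ((G.neighborFinset v).filter (fun u => c u = j)).card := by
      exact Finset.card_eq_sum_card_fiberwise (fun x _ => Finset.mem_univ (c x))
    have heq : ∀ j : Fin k, ((G.neighborFinset v).filter (fun u => c u = j)).card = f v j := by
      intro j
      congr 1
      ext u
      simp [mem_neighborFinset, and_comm]
    have h2 : ∑ j : Fin k, f v j = (G.neighborFinset v).card := by
      rw [hpart]
      exact (Finset.sum_congr rfl (fun j _ => heq j)).symm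
    rw [h2]
    exact hreg v
  -- so k * f v i = r
  have hkf : ∀ v : V, k * f v i = r := by
    intro v
    rw [← hsum v]
    rw [Finset.sum_congr rfl (fun j _ => hcard v j)]
    simp [mul_comm]
  -- double counting: ∑ v, f v i = r * |V_i|
  have hdc : ∑ v : V, f v i = r * (Finset.univ.filter (fun v => c v = i)).card := by
    have : ∀ v : V, f v i =
        ∑ u ∈ Finset.univ.filter (fun u => c u = i), (if G.Adj v u then 1 else 0) := by
      intro v
      rw [← Finset.card_filter]
      simp only [hf]
      congr 1
      ext u
      simp [and_comm]
    rw [Finset.sum_congr rfl (fun v _ => this v), Finset.sum_comm]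
    rw [Finset.sum_congr rfl (fun u hu => by
      have : ∑ v : V, (if G.Adj v u then 1 else 0) = G.degree u := by
        rw [← Finset.card_filter]
        show _ = (G.neighborFinset u).card
        congr 1
        ext v
        simp [adj_comm]
      rw [this, hreg u])]
    simp [mul_comm]
  -- conclude
  have h1 : k * (r * (Finset.univ.filter (fun v => c v = i)).card) = r * Fintype.card V := by
    rw [← hdc, Finset.mul_sum, Finset.sum_congr rfl (fun v _ => hkf v)]
    simp [mul_comm]
  have h2 : r * (k * (Finset.univ.filter (fun v => c v = i)).card) = r * Fintype.card V := by
    rw [← h1]; ring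
  exact Nat.eq_of_mul_eq_mul_left (Nat.lt_of_lt_of_le Nat.zero_lt_one hr) h2
end

section
/- Let G be a finite simple r-regular graph with r ≥ 1 and k ≥ 2 an integer. If G admits a neighborhood-balanced k-coloring, then k divides |V(G)| and k² divides |E(G)|. -/
open SimpleGraph Finset

theorem stmt_5 {V : Type*} [Fintype V] [DecidableEq V] (G : SimpleGraph V)
    [DecidableRel G.Adj] (r k : ℕ) (hr : 1 ≤ r) (hreg : G.IsRegularOfDegree r)
    (hk : 2 ≤ k) (h : ∃ c : V → Fin k, IsNBC G k c) :
    k ∣ Fintype.card V ∧ k ^ 2 ∣ G.edgeFinset.card := by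
  classical
  obtain ⟨c, hc⟩ := h
  have hk0 : 0 < k := by omega
  haveI : NeZero k := ⟨by omega⟩
  cases isEmpty_or_nonempty V with
  | inl hV =>
    constructor
    · simp [Fintype.card_eq_zero]
    · have : G.edgeFinset = ∅ := by
        haveI : IsEmpty (Sym2 V) := by infer_instance
        exact Finset.eq_empty_of_isEmpty _
      simp [this]
  | inr hV =>
  set F : V → Fin k → Finset V := fun v i => univ.filter (fun u => G.Adj v u ∧ c u = i)
    with hF
  have hc' : ∀ v : V, ∀ i j : Fin k, (F v i).card = (F v j).card := by
    intro v i j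
    have h1 : {u | G.Adj v u ∧ c u = i} = ↑(F v i) := by ext u; simp [hF]
    have h2 : {u | G.Adj v u ∧ c u = j} = ↑(F v j) := by ext u; simp [hF]
    have := hc v i j
    rwa [h1, h2, Set.ncard_coe_finset, Set.ncard_coe_finset] at this
  -- sum over colors is the degree
  have hsum : ∀ v : V, ∑ j : Fin k, (F v j).card = r := by
    intro v
    have h1 : (univ.filter (fun u => G.Adj v u)).card = r := by
      rw [← hreg v, SimpleGraph.degree, neighborFinset_eq_filter]
    rw [← h1, Finset.card_eq_sum_card_fiberwise (f := c) (t := univ)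
      (fun x _ => mem_univ _)]
    refine Finset.sum_congr rfl fun j _ => ?_
    rw [Finset.filter_filter]
  have hm : ∀ v : V, ∀ i : Fin k, k * (F v i).card = r := by
    intro v i
    rw [← hsum v, Finset.sum_congr rfl (fun j _ => hc' v j i), Finset.sum_const,
      Finset.card_univ, Fintype.card_fin, smul_eq_mul]
  obtain ⟨v0⟩ := hV
  set t : ℕ := (F v0 0).card with ht
  have hkt : k * t = r := hm v0 0
  have ht0 : 0 < t := by
    rcases Nat.eq_zero_or_pos t with h0 | h0
    · rw [h0, Nat.mul_zero] at hkt; omega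
    · exact h0
  have huni : ∀ v : V, ∀ i : Fin k, (F v i).card = t := by
    intro v i
    exact Nat.eq_of_mul_eq_mul_left hk0 (by rw [hm v i, hkt])
  set Cls : Fin k → Finset V := fun i => univ.filter (fun v => c v = i) with hCls
  -- double counting edges between classes
  have hS : ∀ i j : Fin k,
      ∑ v ∈ Cls i, (F v j).card = ∑ u ∈ Cls j, (F u i).card := by
    intro i j
    rw [← Finset.card_sigma, ← Finset.card_sigma]
    refine Finset.card_bij (fun a _ => ⟨a.2, a.1⟩) ?_ ?_ ?_
    · rintro ⟨v, u⟩ hvu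
      simp only [Finset.mem_sigma, Finset.mem_filter, Finset.mem_univ, true_and,
        hF, hCls] at hvu ⊢
      exact ⟨hvu.2.2, hvu.2.1.symm, hvu.1⟩
    · rintro ⟨v, u⟩ _ ⟨v', u'⟩ _ hh
      simpa [Sigma.ext_iff, and_comm] using hh
    · rintro ⟨u, v⟩ huv
      refine ⟨⟨v, u⟩, ?_, rfl⟩
      simp only [Finset.mem_sigma, Finset.mem_filter, Finset.mem_univ, true_and,
        hF, hCls] at huv ⊢
      exact ⟨huv.2.2, huv.2.1.symm, huv.1⟩
  have hClsEq : ∀ i j : Fin k, (Cls i).card = (Cls j).card := by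
    intro i j
    have := hS i j
    rw [Finset.sum_congr rfl (fun v _ => huni v j),
      Finset.sum_congr rfl (fun u _ => huni u i), Finset.sum_const,
      Finset.sum_const, smul_eq_mul, smul_eq_mul] at this
    exact Nat.eq_of_mul_eq_mul_right ht0 this
  set n : ℕ := (Cls 0).card with hn
  have hcardV : Fintype.card V = k * n := by
    rw [← Finset.card_univ, Finset.card_eq_sum_card_fiberwise (f := c) (t := univ)
      (fun x _ => mem_univ _),
      Finset.sum_congr rfl (fun i _ => (hClsEq i 0 : (Cls i).card = n)),
      Finset.sum_const, Finset.card_univ, Fintype.card_fin, smul_eq_mul]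
  refine ⟨⟨n, hcardV⟩, ?_⟩
  -- the induced graph on color class 0
  set G0 : SimpleGraph V :=
    { Adj := fun u v => G.Adj u v ∧ c u = 0 ∧ c v = 0
      symm := ⟨fun u v huv => ⟨huv.1.symm, huv.2.2, huv.2.1⟩⟩
      loopless := ⟨fun u hu => G.loopless.irrefl u hu.1⟩ } with hG0
  have hG0Adj : ∀ u v : V, G0.Adj u v ↔ G.Adj u v ∧ c u = 0 ∧ c v = 0 :=
    fun u v => Iff.rfl
  have hdeg : ∀ v : V, G0.degree v = if c v = 0 then t else 0 := by
    intro v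
    rw [SimpleGraph.degree, neighborFinset_eq_filter]
    by_cases h0 : c v = 0
    · rw [if_pos h0, ← huni v 0]
      congr 1
      ext u
      simp only [Finset.mem_filter, Finset.mem_univ, true_and, hF, hG0Adj]
      tauto
    · rw [if_neg h0, Finset.card_eq_zero, Finset.eq_empty_iff_forall_notMem]
      intro u hu
      simp only [Finset.mem_filter, Finset.mem_univ, true_and, hG0Adj] at hu
      exact h0 hu.2.1
  have hdegsum : ∑ v, G0.degree v = n * t := by
    rw [Finset.sum_congr rfl (fun v _ => hdeg v), Finset.sum_ite, Finset.sum_const,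
      Finset.sum_const_zero, add_zero, smul_eq_mul]
  have heven : ∃ q, n * t = 2 * q := by
    refine ⟨G0.edgeFinset.card, ?_⟩
    rw [← hdegsum, G0.sum_degrees_eq_twice_card_edges]
  obtain ⟨q, hq⟩ := heven
  have h2E : 2 * G.edgeFinset.card = 2 * (k ^ 2 * q) := by
    rw [← G.sum_degrees_eq_twice_card_edges]
    have : ∑ v, G.degree v = Fintype.card V * r := by
      rw [Finset.sum_congr rfl (fun v _ => hreg v), Finset.sum_const,
        Finset.card_univ, smul_eq_mul]
    rw [this, hcardV, ← hkt]
    ring_nf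
    rw [mul_comm n t] at hq
    nlinarith [hq]
  exact ⟨q, Nat.eq_of_mul_eq_mul_left two_pos h2E⟩
end

section
/- Let G and H be finite simple graphs and k ≥ 2 an integer. If H admits a neighborhood-balanced k-coloring in which all k color classes have the same cardinality, then the lexicographic product G[H] admits a neighborhood-balanced k-coloring. -/
open SimpleGraph

/-- The lexicographic product `G[H]` of simple graphs. -/
def lexProd {V W : Type*} (G : SimpleGraph V) (H : SimpleGraph W) :
    SimpleGraph (V × W) where
  Adj x y := G.Adj x.1 y.1 ∨ (x.1 = y.1 ∧ H.Adj x.2 y.2)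
  symm := by
    constructor
    rintro x y (h | ⟨h1, h2⟩)
    · exact Or.inl h.symm
    · exact Or.inr ⟨h1.symm, h2.symm⟩
  loopless := by
    constructor
    rintro x (h | ⟨-, h2⟩)
    · exact G.irrefl h
    · exact H.irrefl h2

lemma ncard_prod' {V W : Type*} (s : Set V) (t : Set W) :
    (s ×ˢ t).ncard = s.ncard * t.ncard := by
  rw [← Nat.card_coe_set_eq, ← Nat.card_coe_set_eq, ← Nat.card_coe_set_eq,
    Nat.card_congr (Equiv.Set.prod s t), Nat.card_prod]

theorem stmt_7 {V W : Type*} [Fintype V] [Fintype W]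
    (G : SimpleGraph V) (H : SimpleGraph W) (k : ℕ) (hk : 2 ≤ k)
    (hH : ∃ c : W → Fin k, IsNBC H k c ∧
      ∀ i j : Fin k, {w | c w = i}.ncard = {w | c w = j}.ncard) :
    ∃ c : V × W → Fin k, IsNBC (lexProd G H) k c := by
  obtain ⟨c, hc, hcls⟩ := hH
  refine ⟨fun p => c p.2, ?_⟩
  intro p i j
  obtain ⟨v, w⟩ := p
  have key : ∀ i : Fin k,
      {u : V × W | (lexProd G H).Adj (v, w) u ∧ c u.2 = i}.ncard =
        {u : V | G.Adj v u}.ncard * {x : W | c x = i}.ncard +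
          {x : W | H.Adj w x ∧ c x = i}.ncard := by
    intro i
    have hsplit : {u : V × W | (lexProd G H).Adj (v, w) u ∧ c u.2 = i} =
        ({u : V | G.Adj v u} ×ˢ {x : W | c x = i}) ∪
          ({v} ×ˢ {x : W | H.Adj w x ∧ c x = i}) := by
      ext ⟨u, x⟩
      simp only [lexProd, Set.mem_setOf_eq, Set.mem_union, Set.mem_prod,
        Set.mem_singleton_iff]
      constructor
      · rintro ⟨h | ⟨h1, h2⟩, hc'⟩
        · exact Or.inl ⟨h, hc'⟩
        · exact Or.inr ⟨h1.symm, h2, hc'⟩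
      · rintro (⟨h, hc'⟩ | ⟨h1, h2, hc'⟩)
        · exact ⟨Or.inl h, hc'⟩
        · exact ⟨Or.inr ⟨h1.symm, h2⟩, hc'⟩
    rw [hsplit, Set.ncard_union_eq ?_ (Set.toFinite _) (Set.toFinite _),
      ncard_prod', ncard_prod', Set.ncard_singleton, one_mul]
    · rw [Set.disjoint_left]
      rintro ⟨u, x⟩ ⟨hu, -⟩ ⟨hu', -⟩
      simp only [Set.mem_setOf_eq] at hu
      simp only [Set.mem_singleton_iff] at hu'
      exact G.loopless.irrefl v (hu' ▸ hu)
  rw [key i, key j, hcls i j, hc w i j]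
end

section
/- Let G and H be finite simple graphs and k ≥ 2 an integer. If G admits a neighborhood-balanced k-coloring, then the direct (tensor) product G × H admits a neighborhood-balanced k-coloring. -/
open SimpleGraph

/-- The direct (tensor) product `G × H` of simple graphs. -/
def tensorProd {V W : Type*} (G : SimpleGraph V) (H : SimpleGraph W) :
    SimpleGraph (V × W) where
  Adj x y := G.Adj x.1 y.1 ∧ H.Adj x.2 y.2
  symm := by
    constructor
    rintro x y ⟨h1, h2⟩
    exact ⟨h1.symm, h2.symm⟩
  loopless := by
    constructor
    rintro x ⟨h, -⟩
    exact G.irrefl h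

theorem stmt_8 {V W : Type*} [Fintype V] [Fintype W]
    (G : SimpleGraph V) (H : SimpleGraph W) (k : ℕ) (hk : 2 ≤ k)
    (hG : ∃ c : V → Fin k, IsNBC G k c) :
    ∃ c : V × W → Fin k, IsNBC (tensorProd G H) k c := by
  obtain ⟨c, hc⟩ := hG
  refine ⟨fun p => c p.1, ?_⟩
  intro v i j
  have key : ∀ m : Fin k, {u : V × W | (tensorProd G H).Adj v u ∧ c u.1 = m} =
      {u | G.Adj v.1 u ∧ c u = m} ×ˢ {w | H.Adj v.2 w} := by
    intro m
    ext ⟨a, b⟩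
    simp only [Set.mem_setOf_eq, Set.mem_prod, tensorProd]
    tauto
  rw [key i, key j, ncard_prod', ncard_prod', hc v.1 i j]
end

section
/- Let G and H be finite simple graphs and k ≥ 2 an integer. If both G and H admit neighborhood-balanced k-colorings, then the Cartesian (box) product G □ H admits a neighborhood-balanced k-coloring. -/
open SimpleGraph

theorem stmt_9 {V W : Type*} [Fintype V] [Fintype W]
    (G : SimpleGraph V) (H : SimpleGraph W) (k : ℕ) (hk : 2 ≤ k)
    (hG : ∃ c : V → Fin k, IsNBC G k c) (hH : ∃ c : W → Fin k, IsNBC H k c) :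
    ∃ c : V × W → Fin k, IsNBC (G □ H) k c := by
  haveI : NeZero k := ⟨by omega⟩
  obtain ⟨cG, hcG⟩ := hG
  obtain ⟨cH, hcH⟩ := hH
  refine ⟨fun p => cG p.1 + cH p.2, ?_⟩
  intro v i j
  have key : ∀ m : Fin k,
      {p : V × W | (G □ H).Adj v p ∧ cG p.1 + cH p.2 = m}.ncard
        = {u | G.Adj v.1 u ∧ cG u = m - cH v.2}.ncard
          + {u | H.Adj v.2 u ∧ cH u = m - cG v.1}.ncard := by
    intro m
    have hset : {p : V × W | (G □ H).Adj v p ∧ cG p.1 + cH p.2 = m}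
        = (fun u => (u, v.2)) '' {u | G.Adj v.1 u ∧ cG u = m - cH v.2}
          ∪ (fun u => (v.1, u)) '' {u | H.Adj v.2 u ∧ cH u = m - cG v.1} := by
      ext ⟨a, b⟩
      simp only [Set.mem_setOf_eq, boxProd_adj, Set.mem_union, Set.mem_image,
        Prod.mk.injEq]
      constructor
      · rintro ⟨⟨h, hb⟩ | ⟨h, ha⟩, hm⟩
        · exact Or.inl ⟨a, ⟨h, by rw [eq_sub_iff_add_eq, hb]; exact hm⟩, rfl, hb⟩
        · exact Or.inr ⟨b, ⟨h, by rw [eq_sub_iff_add_eq, ha, add_comm]; exact hm⟩, ha, rfl⟩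
      · rintro (⟨u, ⟨h, hc⟩, rfl, hb⟩ | ⟨u, ⟨h, hc⟩, ha, rfl⟩)
        · exact ⟨Or.inl ⟨h, hb⟩, by rw [hc, ← hb]; abel⟩
        · exact ⟨Or.inr ⟨h, ha⟩, by rw [hc, ← ha]; abel⟩
    have hdisj : Disjoint ((fun u => (u, v.2)) '' {u | G.Adj v.1 u ∧ cG u = m - cH v.2})
        ((fun u => (v.1, u)) '' {u | H.Adj v.2 u ∧ cH u = m - cG v.1}) := by
      rw [Set.disjoint_left]
      rintro p ⟨u, ⟨h, -⟩, rfl⟩ ⟨u', ⟨h', -⟩, he⟩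
      have hu : v.1 = u := congrArg Prod.fst he
      exact h.ne hu
    rw [hset, Set.ncard_union_eq hdisj,
      Set.ncard_image_of_injective _ (fun a b h => congrArg Prod.fst h),
      Set.ncard_image_of_injective _ (fun a b h => congrArg Prod.snd h)]
  rw [key i, key j, hcG v.1 (i - cH v.2) (j - cH v.2), hcH v.2 (i - cG v.1) (j - cG v.1)]
end

section
/- Let G and H be finite simple graphs and k ≥ 2 an integer. If both G and H admit neighborhood-balanced k-colorings, then the strong product G ⊠ H admits a neighborhood-balanced k-coloring. -/
open SimpleGraph

/-- The strong product `G ⊠ H` of simple graphs. -/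
def strongProd {V W : Type*} (G : SimpleGraph V) (H : SimpleGraph W) :
    SimpleGraph (V × W) where
  Adj x y := (x.1 = y.1 ∧ H.Adj x.2 y.2) ∨ (x.2 = y.2 ∧ G.Adj x.1 y.1) ∨
    (G.Adj x.1 y.1 ∧ H.Adj x.2 y.2)
  symm := ⟨by
    rintro x y (⟨h1, h2⟩ | ⟨h1, h2⟩ | ⟨h1, h2⟩)
    · exact Or.inl ⟨h1.symm, h2.symm⟩
    · exact Or.inr (Or.inl ⟨h1.symm, h2.symm⟩)
    · exact Or.inr (Or.inr ⟨h1.symm, h2.symm⟩)⟩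
  loopless := ⟨by
    rintro x (⟨-, h⟩ | ⟨-, h⟩ | ⟨h, -⟩)
    · exact H.irrefl h
    · exact G.irrefl h
    · exact G.irrefl h⟩

private lemma keyA {V W : Type*} [Fintype V] [Fintype W] {k : ℕ} [NeZero k]
    (q1 : V → Prop) (q2 : W → Prop) (cG : V → Fin k) (cH : W → Fin k)
    (hbal : ∀ i j : Fin k, {y | q2 y ∧ cH y = i}.ncard = {y | q2 y ∧ cH y = j}.ncard)
    (i j : Fin k) :
    {p : V × W | q1 p.1 ∧ q2 p.2 ∧ cG p.1 + cH p.2 = i}.ncard =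
    {p : V × W | q1 p.1 ∧ q2 p.2 ∧ cG p.1 + cH p.2 = j}.ncard := by
  classical
  have hbal' : ∀ i j : Fin k,
      (Finset.univ.filter fun y => q2 y ∧ cH y = i).card =
      (Finset.univ.filter fun y => q2 y ∧ cH y = j).card := by
    intro i j
    have := hbal i j
    rwa [Set.ncard_eq_toFinset_card', Set.ncard_eq_toFinset_card',
      Set.toFinset_setOf, Set.toFinset_setOf] at this
  have conv : ∀ (m : Fin k),
      {p : V × W | q1 p.1 ∧ q2 p.2 ∧ cG p.1 + cH p.2 = m}.ncard
      = ∑ x : V, (Finset.univ.filter (fun y => q1 x ∧ q2 y ∧ cG x + cH y = m)).card := by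
    intro m
    rw [Set.ncard_eq_toFinset_card']
    simp only [Set.toFinset_setOf]
    rw [Finset.card_filter, Fintype.sum_prod_type]
    exact Finset.sum_congr rfl fun x _ => (Finset.card_filter _ _).symm
  rw [conv i, conv j]
  refine Finset.sum_congr rfl fun x _ => ?_
  by_cases hx : q1 x
  · have e : ∀ m : Fin k,
        (Finset.univ.filter fun y => q1 x ∧ q2 y ∧ cG x + cH y = m).card
        = (Finset.univ.filter fun y => q2 y ∧ cH y = m - cG x).card := by
      intro m
      congr 1
      ext y
      simp [hx, eq_sub_iff_add_eq']
    rw [e i, e j, hbal']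
  · simp [hx]

private lemma keyB {V W : Type*} [Fintype V] [Fintype W] {k : ℕ} [NeZero k]
    (q1 : V → Prop) (q2 : W → Prop) (cG : V → Fin k) (cH : W → Fin k)
    (hbal : ∀ i j : Fin k, {x | q1 x ∧ cG x = i}.ncard = {x | q1 x ∧ cG x = j}.ncard)
    (i j : Fin k) :
    {p : V × W | q1 p.1 ∧ q2 p.2 ∧ cG p.1 + cH p.2 = i}.ncard =
    {p : V × W | q1 p.1 ∧ q2 p.2 ∧ cG p.1 + cH p.2 = j}.ncard := by
  classical
  have hbal' : ∀ i j : Fin k,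
      (Finset.univ.filter fun x => q1 x ∧ cG x = i).card =
      (Finset.univ.filter fun x => q1 x ∧ cG x = j).card := by
    intro i j
    have := hbal i j
    rwa [Set.ncard_eq_toFinset_card', Set.ncard_eq_toFinset_card',
      Set.toFinset_setOf, Set.toFinset_setOf] at this
  have conv : ∀ (m : Fin k),
      {p : V × W | q1 p.1 ∧ q2 p.2 ∧ cG p.1 + cH p.2 = m}.ncard
      = ∑ y : W, (Finset.univ.filter (fun x => q1 x ∧ q2 y ∧ cG x + cH y = m)).card := by
    intro m
    rw [Set.ncard_eq_toFinset_card']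
    simp only [Set.toFinset_setOf]
    rw [Finset.card_filter, Fintype.sum_prod_type_right]
    exact Finset.sum_congr rfl fun y _ => (Finset.card_filter _ _).symm
  rw [conv i, conv j]
  refine Finset.sum_congr rfl fun y _ => ?_
  by_cases hy : q2 y
  · have e : ∀ m : Fin k,
        (Finset.univ.filter fun x => q1 x ∧ q2 y ∧ cG x + cH y = m).card
        = (Finset.univ.filter fun x => q1 x ∧ cG x = m - cH y).card := by
      intro m
      congr 1
      ext x
      simp [hy, eq_sub_iff_add_eq]
    rw [e i, e j, hbal']
  · simp [hy]

theorem stmt_10 {V W : Type*} [Fintype V] [Fintype W]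
    (G : SimpleGraph V) (H : SimpleGraph W) (k : ℕ) (hk : 2 ≤ k)
    (hG : ∃ c : V → Fin k, IsNBC G k c) (hH : ∃ c : W → Fin k, IsNBC H k c) :
    ∃ c : V × W → Fin k, IsNBC (strongProd G H) k c := by
  classical
  haveI : NeZero k := ⟨by omega⟩
  obtain ⟨cG, hcG⟩ := hG
  obtain ⟨cH, hcH⟩ := hH
  refine ⟨fun p => cG p.1 + cH p.2, ?_⟩
  rintro ⟨u, v⟩ i j
  have split : ∀ m : Fin k,
      {p : V × W | (strongProd G H).Adj (u, v) p ∧ cG p.1 + cH p.2 = m}.ncard =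
      {p : V × W | (u = p.1) ∧ H.Adj v p.2 ∧ cG p.1 + cH p.2 = m}.ncard +
      {p : V × W | G.Adj u p.1 ∧ (v = p.2) ∧ cG p.1 + cH p.2 = m}.ncard +
      {p : V × W | G.Adj u p.1 ∧ H.Adj v p.2 ∧ cG p.1 + cH p.2 = m}.ncard := by
    intro m
    have e : {p : V × W | (strongProd G H).Adj (u, v) p ∧ cG p.1 + cH p.2 = m} =
        ({p : V × W | (u = p.1) ∧ H.Adj v p.2 ∧ cG p.1 + cH p.2 = m} ∪
         {p : V × W | G.Adj u p.1 ∧ (v = p.2) ∧ cG p.1 + cH p.2 = m}) ∪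
        {p : V × W | G.Adj u p.1 ∧ H.Adj v p.2 ∧ cG p.1 + cH p.2 = m} := by
      ext ⟨x, y⟩
      simp only [strongProd, Set.mem_setOf_eq, Set.mem_union]
      tauto
    have d1 : Disjoint {p : V × W | (u = p.1) ∧ H.Adj v p.2 ∧ cG p.1 + cH p.2 = m}
        {p : V × W | G.Adj u p.1 ∧ (v = p.2) ∧ cG p.1 + cH p.2 = m} := by
      rw [Set.disjoint_left]
      rintro ⟨x, y⟩ ⟨h1, -, -⟩ ⟨h2, -, -⟩
      exact G.irrefl (v := u) (h1 ▸ h2)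
    have d2 : Disjoint
        ({p : V × W | (u = p.1) ∧ H.Adj v p.2 ∧ cG p.1 + cH p.2 = m} ∪
         {p : V × W | G.Adj u p.1 ∧ (v = p.2) ∧ cG p.1 + cH p.2 = m})
        {p : V × W | G.Adj u p.1 ∧ H.Adj v p.2 ∧ cG p.1 + cH p.2 = m} := by
      rw [Set.disjoint_left]
      rintro ⟨x, y⟩ (⟨h1, -, -⟩ | ⟨-, h1, -⟩) ⟨h2, h3, -⟩
      · exact G.irrefl (v := u) (h1 ▸ h2)
      · exact H.irrefl (v := v) (h1 ▸ h3)
    rw [e, Set.ncard_union_eq d2 (Set.toFinite _) (Set.toFinite _),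
      Set.ncard_union_eq d1 (Set.toFinite _) (Set.toFinite _)]
  show {p : V × W | (strongProd G H).Adj (u, v) p ∧ cG p.1 + cH p.2 = i}.ncard =
    {p : V × W | (strongProd G H).Adj (u, v) p ∧ cG p.1 + cH p.2 = j}.ncard
  rw [split i, split j,
    keyA (fun x => u = x) (H.Adj v) cG cH (hcH v) i j,
    keyB (G.Adj u) (fun y => v = y) cG cH (hcG u) i j,
    keyA (G.Adj u) (H.Adj v) cG cH (hcH v) i j]
end

section
/- Let G and H be finite simple graphs and k ≥ 2 an integer. If G admits a neighborhood-balanced k-coloring in which all k color classes have the same cardinality, and H admits a neighborhood-balanced k-coloring in which all k color classes have the same cardinality, then the join G + H admits a neighborhood-balanced k-coloring. -/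
open SimpleGraph

/-- The join `G + H` of simple graphs: disjoint union plus all cross edges. -/
def joinGraph {V W : Type*} (G : SimpleGraph V) (H : SimpleGraph W) :
    SimpleGraph (V ⊕ W) where
  Adj x y := match x, y with
    | Sum.inl a, Sum.inl b => G.Adj a b
    | Sum.inr a, Sum.inr b => H.Adj a b
    | Sum.inl _, Sum.inr _ => True
    | Sum.inr _, Sum.inl _ => True
  symm := by
    constructor
    rintro (a | a) (b | b) h
    · exact G.symm.symm _ _ h
    · trivial
    · trivial
    · exact H.symm.symm _ _ h
  loopless := by
    constructor
    rintro (a | a) h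
    · exact G.loopless.irrefl a h
    · exact H.loopless.irrefl a h


lemma join_ncard_inl {V W : Type*} [Fintype V] [Fintype W]
    (G : SimpleGraph V) (H : SimpleGraph W) {k : ℕ}
    (cG : V → Fin k) (cH : W → Fin k) (v : V) (i : Fin k) :
    {u : V ⊕ W | (joinGraph G H).Adj (Sum.inl v) u ∧ Sum.elim cG cH u = i}.ncard
      = {u : V | G.Adj v u ∧ cG u = i}.ncard + {w : W | cH w = i}.ncard := by
  have hset : {u : V ⊕ W | (joinGraph G H).Adj (Sum.inl v) u ∧ Sum.elim cG cH u = i}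
      = (Sum.inl '' {u : V | G.Adj v u ∧ cG u = i}) ∪ (Sum.inr '' {w : W | cH w = i}) := by
    ext (a | a) <;> simp [joinGraph]
  rw [hset, Set.ncard_union_eq, Set.ncard_image_of_injective _ Sum.inl_injective,
    Set.ncard_image_of_injective _ Sum.inr_injective]
  · exact Set.disjoint_left.2 (by rintro x ⟨a, _, rfl⟩ ⟨b, _, h⟩; exact Sum.inr_ne_inl h)

lemma join_ncard_inr {V W : Type*} [Fintype V] [Fintype W]
    (G : SimpleGraph V) (H : SimpleGraph W) {k : ℕ}
    (cG : V → Fin k) (cH : W → Fin k) (v : W) (i : Fin k) :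
    {u : V ⊕ W | (joinGraph G H).Adj (Sum.inr v) u ∧ Sum.elim cG cH u = i}.ncard
      = {u : W | H.Adj v u ∧ cH u = i}.ncard + {w : V | cG w = i}.ncard := by
  have hset : {u : V ⊕ W | (joinGraph G H).Adj (Sum.inr v) u ∧ Sum.elim cG cH u = i}
      = (Sum.inr '' {u : W | H.Adj v u ∧ cH u = i}) ∪ (Sum.inl '' {w : V | cG w = i}) := by
    ext (a | a) <;> simp [joinGraph]
  rw [hset, Set.ncard_union_eq, Set.ncard_image_of_injective _ Sum.inr_injective,
    Set.ncard_image_of_injective _ Sum.inl_injective]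
  · exact Set.disjoint_left.2 (by rintro x ⟨a, _, rfl⟩ ⟨b, _, h⟩; exact Sum.inl_ne_inr h)

theorem stmt_11 {V W : Type*} [Fintype V] [Fintype W]
    (G : SimpleGraph V) (H : SimpleGraph W) (k : ℕ) (hk : 2 ≤ k)
    (hG : ∃ c : V → Fin k, IsNBC G k c ∧
      ∀ i j : Fin k, {v | c v = i}.ncard = {v | c v = j}.ncard)
    (hH : ∃ c : W → Fin k, IsNBC H k c ∧
      ∀ i j : Fin k, {w | c w = i}.ncard = {w | c w = j}.ncard) :
    ∃ c : V ⊕ W → Fin k, IsNBC (joinGraph G H) k c := by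
  obtain ⟨cG, hG1, hG2⟩ := hG
  obtain ⟨cH, hH1, hH2⟩ := hH
  refine ⟨Sum.elim cG cH, ?_⟩
  rintro (v | v) i j
  · rw [join_ncard_inl, join_ncard_inl, hG1 v i j, hH2 i j]
  · rw [join_ncard_inr, join_ncard_inr, hH1 v i j, hG2 i j]
end

section
/- For every integer n > 1 and every integer k ≥ 2, the complete graph K_n does not admit a neighborhood-balanced k-coloring. -/
open SimpleGraph

theorem stmt_13 (n k : ℕ) (hn : 1 < n) (hk : 2 ≤ k) :
    ¬ ∃ c : Fin n → Fin k, IsNBC (⊤ : SimpleGraph (Fin n)) k c := by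
  rintro ⟨c, h⟩
  -- key counting lemma: for a color class S i, counted from a vertex v
  have key : ∀ (v : Fin n) (i : Fin k),
      {u | (⊤ : SimpleGraph (Fin n)).Adj v u ∧ c u = i}.ncard =
        {u | c u = i}.ncard - (if c v = i then 1 else 0) := by
    intro v i
    by_cases hv : c v = i
    · have hset : {u | c u = i} = insert v {u | (⊤ : SimpleGraph (Fin n)).Adj v u ∧ c u = i} := by
        ext u
        simp only [Set.mem_setOf_eq, Set.mem_insert_iff, top_adj]
        constructor
        · intro hu
          by_cases huv : u = v
          · exact Or.inl huv
          · exact Or.inr ⟨Ne.symm huv, hu⟩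
        · rintro (rfl | ⟨_, hu⟩)
          · exact hv
          · exact hu
      have hnot : v ∉ {u | (⊤ : SimpleGraph (Fin n)).Adj v u ∧ c u = i} := by
        simp [top_adj]
      rw [hset, Set.ncard_insert_of_notMem hnot (Set.toFinite _)]
      simp [hv]
    · have hset : {u | (⊤ : SimpleGraph (Fin n)).Adj v u ∧ c u = i} = {u | c u = i} := by
        ext u
        simp only [Set.mem_setOf_eq, top_adj]
        constructor
        · rintro ⟨_, hu⟩; exact hu
        · intro hu
          refine ⟨?_, hu⟩
          rintro rfl; exact hv hu
      rw [hset]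
      simp [hv]
  by_cases hconst : ∀ v w : Fin n, c v = c w
  · -- constant coloring
    haveI : Nontrivial (Fin k) := Fin.nontrivial_iff_two_le.mpr hk
    obtain ⟨v, w, hvw⟩ : ∃ v w : Fin n, v ≠ w :=
      ⟨⟨0, by omega⟩, ⟨1, by omega⟩, by simp [Fin.ext_iff]⟩
    obtain ⟨j, hj⟩ := exists_ne (c v)
    have h0 : {u | (⊤ : SimpleGraph (Fin n)).Adj v u ∧ c u = j}.ncard = 0 := by
      rw [Set.ncard_eq_zero (Set.toFinite _)]
      ext u
      simp only [Set.mem_setOf_eq, Set.mem_empty_iff_false, iff_false, not_and]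
      intro _ hu
      exact hj ((hconst v u).trans hu).symm
    have h1 : 0 < {u | (⊤ : SimpleGraph (Fin n)).Adj v u ∧ c u = c v}.ncard := by
      rw [Set.ncard_pos (Set.toFinite _)]
      exact ⟨w, by simp [top_adj, hvw, hconst w v]⟩
    rw [h v (c v) j, h0] at h1
    exact lt_irrefl 0 h1
  · push_neg at hconst
    obtain ⟨v, w, hvw⟩ := hconst
    -- a = neighbors of v of any color, b = neighbors of w of any color
    have h1 := key v (c v)
    have h2 := key w (c v)
    have h3 := key v (c w)
    have h4 := key w (c w)
    rw [if_pos rfl] at h1 h4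
    rw [if_neg (Ne.symm hvw)] at h2
    rw [if_neg hvw] at h3
    have e1 := h v (c v) (c w)
    have e2 := h w (c v) (c w)
    -- color class c v is nonempty (contains v), so its ncard ≥ 1
    have p1 : 0 < {u | c u = c v}.ncard := by
      rw [Set.ncard_pos (Set.toFinite _)]; exact ⟨v, rfl⟩
    have p2 : 0 < {u | c u = c w}.ncard := by
      rw [Set.ncard_pos (Set.toFinite _)]; exact ⟨w, rfl⟩
    omega
end

section
/- Let p ≥ 2 and k ≥ 2 be integers, and let n_1, …, n_p be positive integers. The complete multipartite graph K_{n_1, n_2, …, n_p} admits a neighborhood-balanced k-coloring if and only if k divides n_i for every i = 1, 2, …, p. -/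
open SimpleGraph

lemma card_filter_sigma' {p : ℕ} {n : Fin p → ℕ} (P : (Σ i : Fin p, Fin (n i)) → Prop)
    [DecidablePred P] :
    (Finset.univ.filter P).card = ∑ i, (Finset.univ.filter fun a : Fin (n i) => P ⟨i, a⟩).card := by
  rw [← Finset.card_sigma]
  congr 1
  ext ⟨i, a⟩
  simp [Finset.mem_sigma]

lemma ncard_nbhd {p k : ℕ} (n : Fin p → ℕ) (c : (Σ i : Fin p, Fin (n i)) → Fin k)
    (v : Σ i : Fin p, Fin (n i)) (j : Fin k) :
    {u | (completeMultipartiteGraph (fun i : Fin p => Fin (n i))).Adj v u ∧ c u = j}.ncard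
      = ∑ i ∈ Finset.univ.erase v.1,
          (Finset.univ.filter fun a : Fin (n i) => c ⟨i, a⟩ = j).card := by
  classical
  have hset : {u | (completeMultipartiteGraph (fun i : Fin p => Fin (n i))).Adj v u ∧ c u = j}
      = ↑(Finset.univ.filter fun u : Σ i : Fin p, Fin (n i) => v.1 ≠ u.1 ∧ c u = j) := by
    ext u; simp [completeMultipartiteGraph]
  rw [hset, Set.ncard_coe_finset, card_filter_sigma']
  refine Eq.trans (Finset.sum_erase Finset.univ ?_).symm (Finset.sum_congr rfl fun i hi => ?_)
  · simp
  have hne : v.1 ≠ i := (Finset.mem_erase.mp hi).1.symm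
  congr 1
  ext a
  simp [hne]

lemma range_mod_card (k j : ℕ) (hj : j < k) :
    ∀ m, ((Finset.range (m * k)).filter fun a => a % k = j).card = m := by
  intro m
  induction m with
  | zero => simp
  | succ m ih =>
    have hsplit : Finset.range ((m + 1) * k) =
        Finset.range (m * k) ∪ Finset.Ico (m * k) ((m + 1) * k) := by
      rw [Finset.range_eq_Ico, Finset.range_eq_Ico]
      exact (Finset.Ico_union_Ico_eq_Ico (Nat.zero_le (m * k)) (by nlinarith)).symm
    have hdisj : Disjoint (Finset.range (m * k)) (Finset.Ico (m * k) ((m + 1) * k)) := by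
      simp [Finset.disjoint_left, Finset.mem_Ico]
      omega
    rw [hsplit, Finset.filter_union,
      Finset.card_union_of_disjoint (Finset.disjoint_filter_filter hdisj), ih]
    have hone : (Finset.Ico (m * k) ((m + 1) * k)).filter (fun a => a % k = j) = {m * k + j} := by
      ext x
      simp only [Finset.mem_filter, Finset.mem_Ico, Finset.mem_singleton]
      constructor
      · rintro ⟨⟨h1, h2⟩, h3⟩
        have hd : x / k = m := Nat.div_eq_of_lt_le (by linarith [Nat.mul_comm m k]) h2
        have hx : x = k * m + j := by
          conv_lhs => rw [← Nat.div_add_mod x k, hd, h3]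
        rw [hx]; ring
      · rintro rfl
        refine ⟨⟨by omega, by nlinarith⟩, ?_⟩
        rw [Nat.add_comm, Nat.add_mul_mod_self_right, Nat.mod_eq_of_lt hj]
    rw [hone]
    simp

lemma fin_mod_card {N k j : ℕ} (hk : k ∣ N) (hj : j < k) :
    ((Finset.univ : Finset (Fin N)).filter fun a => a.val % k = j).card = N / k := by
  obtain ⟨m, rfl⟩ := hk
  have hk0 : 0 < k := by omega
  have h2 : ((Finset.univ : Finset (Fin (k * m))).filter fun a => a.val % k = j).card
      = ((Finset.range (k * m)).filter fun a => a % k = j).card := by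
    rw [Finset.card_filter, Finset.card_filter,
      Fin.sum_univ_eq_sum_range (fun a => if a % k = j then 1 else 0)]
  rw [h2, Nat.mul_comm k m, range_mod_card k j hj m, Nat.mul_div_cancel _ hk0]

theorem stmt_14 (p k : ℕ) (hp : 2 ≤ p) (hk : 2 ≤ k)
    (n : Fin p → ℕ) (hn : ∀ i, 1 ≤ n i) :
    (∃ c : (Σ i : Fin p, Fin (n i)) → Fin k,
        IsNBC (completeMultipartiteGraph (fun i : Fin p => Fin (n i))) k c) ↔
      ∀ i, k ∣ n i := by
  have hk0 : 0 < k := by omega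
  constructor
  · rintro ⟨c, hc⟩ i
    set A : Fin p → Fin k → ℕ :=
      fun i j => (Finset.univ.filter fun a : Fin (n i) => c ⟨i, a⟩ = j).card with hA
    set B : Fin p → Fin k → ℕ := fun i j => ∑ i' ∈ Finset.univ.erase i, A i' j with hBdef
    set S : Fin k → ℕ := fun j => ∑ i', A i' j with hSdef
    have hB : ∀ i j j', B i j = B i j' := by
      intro i j j'
      have := hc ⟨i, ⟨0, hn i⟩⟩ j j'
      rw [ncard_nbhd, ncard_nbhd] at this
      exact this
    have h1 : ∀ i j, A i j + B i j = S j := fun i j =>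
      Finset.add_sum_erase Finset.univ (fun i' => A i' j) (Finset.mem_univ i)
    have key : ∀ j, (p - 1) * S j = ∑ i', B i' j := by
      intro j
      have h3 : ∑ i', (A i' j + B i' j) = ∑ _i' : Fin p, S j :=
        Finset.sum_congr rfl fun i' _ => h1 i' j
      rw [Finset.sum_add_distrib, Finset.sum_const, Finset.card_univ, Fintype.card_fin,
        smul_eq_mul] at h3
      have h4 : p * S j = (p - 1) * S j + S j := by
        conv_lhs => rw [show p = (p - 1) + 1 by omega]
        rw [add_mul, one_mul]
      have h5 : ∑ i', A i' j = S j := rfl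
      rw [h5] at h3
      linarith [h3, h4]
    have hS : ∀ j j', S j = S j' := by
      intro j j'
      have hBsum : ∑ i', B i' j = ∑ i', B i' j' :=
        Finset.sum_congr rfl fun i' _ => hB i' j j'
      have := key j
      rw [hBsum, ← key j'] at this
      exact Nat.eq_of_mul_eq_mul_left (by omega) this
    have hAeq : ∀ j j', A i j = A i j' := by
      intro j j'
      have e1 := h1 i j
      have e2 := h1 i j'
      have e3 := hB i j j'
      have e4 := hS j j'
      omega
    set j0 : Fin k := ⟨0, by omega⟩ with hj0
    have hni : n i = ∑ j, A i j := by
      have := Finset.card_eq_sum_card_fiberwise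
        (s := (Finset.univ : Finset (Fin (n i)))) (t := (Finset.univ : Finset (Fin k)))
        (f := fun a => c ⟨i, a⟩) (fun x _ => Finset.mem_univ _)
      rw [Finset.card_univ, Fintype.card_fin] at this
      exact this
    have : n i = k * A i j0 := by
      rw [hni]
      have : ∑ j, A i j = ∑ _j : Fin k, A i j0 :=
        Finset.sum_congr rfl fun j _ => hAeq j j0
      rw [this, Finset.sum_const, Finset.card_univ, Fintype.card_fin, smul_eq_mul]
    exact ⟨A i j0, this⟩
  · intro h
    refine ⟨fun u => ⟨u.2.val % k, Nat.mod_lt _ hk0⟩, ?_⟩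
    intro v i j
    rw [ncard_nbhd, ncard_nbhd]
    have hcard : ∀ (i'' : Fin p) (j' : Fin k),
        (Finset.univ.filter fun a : Fin (n i'') =>
          (⟨a.val % k, Nat.mod_lt _ hk0⟩ : Fin k) = j').card = n i'' / k := by
      intro i'' j'
      have he : (Finset.univ.filter fun a : Fin (n i'') =>
            (⟨a.val % k, Nat.mod_lt _ hk0⟩ : Fin k) = j')
          = Finset.univ.filter fun a : Fin (n i'') => a.val % k = j'.val := by
        ext a; simp [Fin.ext_iff]
      rw [he, fin_mod_card (h i'') j'.isLt]
    refine Finset.sum_congr rfl fun i' _ => ?_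
    rw [hcard i' i, hcard i' j]
end

section
/- Let k ≥ 2, and let n and s be positive multiples of k. Let S = {d_1, d_2, …, d_s} with 1 ≤ d_1 < d_2 < … < d_s < n/2 be such that for each residue i ∈ {1, …, k}, exactly s/k of the integers d_1, …, d_s are congruent to i modulo k. Then the circulant graph C_n(S) admits a neighborhood-balanced k-coloring. -/
open SimpleGraph

private lemma aux_mod (k a b x : ℕ) (hk : 0 < k) (hb : b < k) :
    (a + x) % k = b ↔ x % k = (b + (k - a % k)) % k := by
  have hak : a % k < k := Nat.mod_lt _ hk
  have hdm := Nat.div_add_mod a k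
  have key : (a + (b + (k - a % k))) % k = b := by
    have h2 : a + (b + (k - a % k)) = k * (a / k + 1) + b := by
      have h3 : k * (a / k + 1) = k * (a / k) + k := by ring
      omega
    rw [h2, Nat.mul_add_mod, Nat.mod_eq_of_lt hb]
  set m := (b + (k - a % k)) % k with hm
  have hmk : m < k := Nat.mod_lt _ hk
  have hm' : (a + m) % k = b := by
    have h3 : a + m ≡ a + (b + (k - a % k)) [MOD k] :=
      Nat.ModEq.add_left a (Nat.mod_modEq _ k)
    rw [Nat.ModEq] at h3
    rw [h3, key]
  constructor
  · intro h
    have h2 : a + x ≡ a + m [MOD k] := by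
      unfold Nat.ModEq; rw [h, hm']
    have h3 := Nat.ModEq.add_left_cancel' a h2
    rw [Nat.ModEq, Nat.mod_eq_of_lt hmk] at h3; exact h3
  · intro h
    have h2 : x ≡ m [MOD k] := by unfold Nat.ModEq; rw [h, Nat.mod_eq_of_lt hmk]
    have h3 := Nat.ModEq.add_left a h2
    rw [Nat.ModEq] at h3; rw [h3, hm']

private lemma aux2 (k n x : ℕ) (hk : 0 < k) (hkn : k ∣ n) (hx : x ≤ n) :
    (n - x) % k = (k - x % k) % k := by
  have h2 : x % k < k := Nat.mod_lt _ hk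
  have e1 : (n - x) + x = n := Nat.sub_add_cancel hx
  have e2 : (k - x % k) + x % k = k := Nat.sub_add_cancel h2.le
  have step : (n - x) + x ≡ (k - x % k) + x [MOD k] := by
    have hnk : n ≡ k [MOD k] :=
      (Nat.modEq_zero_iff_dvd.mpr hkn).trans (Nat.modEq_zero_iff_dvd.mpr dvd_rfl).symm
    calc (n - x) + x = n := e1
      _ ≡ k [MOD k] := hnk
      _ = (k - x % k) + x % k := e2.symm
      _ ≡ (k - x % k) + x [MOD k] := Nat.ModEq.add_left _ (Nat.mod_modEq x k)
  exact Nat.ModEq.add_right_cancel' x step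

private lemma aux3 (k ρ m : ℕ) (hρ : ρ < k) (hm : m < k) :
    (k - ρ) % k = m ↔ ρ = (k - m) % k := by
  have h1 : (k - ρ) % k = if ρ = 0 then 0 else k - ρ := by
    split
    · next h => subst h; simp
    · next h => exact Nat.mod_eq_of_lt (by omega)
  have h2 : (k - m) % k = if m = 0 then 0 else k - m := by
    split
    · next h => subst h; simp
    · next h => exact Nat.mod_eq_of_lt (by omega)
  rw [h1, h2]; split_ifs <;> omega

theorem stmt_16 (k n s : ℕ) (hk : 2 ≤ k) (hn : 0 < n) (hs : 0 < s)
    (hnk : k ∣ n) (hsk : k ∣ s)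
    (d : Fin s → ℕ) (hd1 : 1 ≤ d ⟨0, hs⟩) (hmono : StrictMono d)
    (hhalf : ∀ t : Fin s, 2 * d t < n)
    (hres : ∀ r : ℕ, r < k →
      k * (Finset.univ.filter (fun t : Fin s => d t % k = r)).card = s) :
    ∃ c : ZMod n → Fin k,
      IsNBC (SimpleGraph.circulantGraph
        (Set.range (fun t : Fin s => (d t : ZMod n)))) k c := by
  have hk0 : 0 < k := by omega
  haveI : NeZero n := ⟨hn.ne'⟩
  refine ⟨fun v => ⟨v.val % k, Nat.mod_lt _ hk0⟩, ?_⟩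
  set c : ZMod n → Fin k := fun v => ⟨v.val % k, Nat.mod_lt _ hk0⟩ with hcdef
  have hdpos : ∀ t : Fin s, 0 < d t := fun t =>
    lt_of_lt_of_le hd1 (hmono.monotone (Fin.le_def.mpr (Nat.zero_le _)))
  have hdlt : ∀ t, d t < n := fun t => by have := hhalf t; omega
  have hvalD : ∀ t, ((d t : ZMod n)).val = d t := fun t => by
    rw [ZMod.val_natCast]; exact Nat.mod_eq_of_lt (hdlt t)
  have hDinj : Function.Injective (fun t : Fin s => (d t : ZMod n)) := by
    intro a b h
    apply hmono.injective
    have h2 := congrArg ZMod.val h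
    simpa [hvalD] using h2
  have hDne : ∀ t, (d t : ZMod n) ≠ 0 := by
    intro t h
    have h2 := (ZMod.natCast_eq_zero_iff _ _).mp h
    have h3 := Nat.le_of_dvd (hdpos t) h2
    have := hdlt t; omega
  have hDneg : ∀ t t' : Fin s, (d t : ZMod n) ≠ -(d t' : ZMod n) := by
    intro t t' h
    have h2 : ((d t + d t' : ℕ) : ZMod n) = 0 := by push_cast; rw [h]; ring
    have h3 : n ∣ d t + d t' := (ZMod.natCast_eq_zero_iff _ _).mp h2
    have h4 := Nat.le_of_dvd (by have := hdpos t; omega) h3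
    have := hhalf t; have := hhalf t'; omega
  have hcval : ∀ (v : ZMod n) (a : ℕ), a < n →
      (c (v + (a : ZMod n))).val = (v.val + a) % k := by
    intro v a ha
    show (v + (a : ZMod n)).val % k = _
    rw [ZMod.val_add, ZMod.val_natCast, Nat.mod_eq_of_lt ha, Nat.mod_mod_of_dvd _ hnk]
  have hcard : ∀ m : ℕ, m < k →
      (Finset.univ.filter fun t : Fin s => d t % k = m).card = s / k := by
    intro m hm
    exact (Nat.div_eq_of_eq_mul_right hk0 (hres m hm).symm).symm
  intro v i j
  have H : ∀ i : Fin k,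
      {u | (circulantGraph (Set.range fun t : Fin s => (d t : ZMod n))).Adj v u ∧ c u = i}.ncard
        = s / k + s / k := by
    intro i
    have hmi : ((i : ℕ) + (k - v.val % k)) % k < k := Nat.mod_lt _ hk0
    set m1 := ((i : ℕ) + (k - v.val % k)) % k with hm1def
    set m2 := (k - m1) % k with hm2def
    have hm2 : m2 < k := Nat.mod_lt _ hk0
    have hcond1 : ∀ t : Fin s, (c (v + (d t : ZMod n)) = i ↔ d t % k = m1) := by
      intro t
      rw [Fin.ext_iff, hcval v (d t) (hdlt t)]
      exact aux_mod k v.val i (d t) hk0 i.isLt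
    have hcond2 : ∀ t : Fin s, (c (v - (d t : ZMod n)) = i ↔ d t % k = m2) := by
      intro t
      have hsub : v - (d t : ZMod n) = v + ((n - d t : ℕ) : ZMod n) := by
        have h5 : ((n - d t : ℕ) : ZMod n) = -(d t : ZMod n) := by
          rw [Nat.cast_sub (hdlt t).le, ZMod.natCast_self]; ring
        rw [h5]; ring
      rw [hsub, Fin.ext_iff, hcval v (n - d t) (by have := hdpos t; have := hdlt t; omega),
        aux_mod k v.val i (n - d t) hk0 i.isLt, aux2 k n (d t) hk0 hnk (hdlt t).le]
      exact aux3 k (d t % k) m1 (Nat.mod_lt _ hk0) hmi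
    have hinj1 : Function.Injective (fun t : Fin s => v + (d t : ZMod n)) :=
      fun a b h => hDinj (add_left_cancel h)
    have hinj2 : Function.Injective (fun t : Fin s => v - (d t : ZMod n)) := by
      intro a b h
      apply hDinj
      have h2 := congrArg (fun x => v - x) h
      simpa [sub_sub_cancel] using h2
    have hset : {u | (circulantGraph (Set.range fun t : Fin s => (d t : ZMod n))).Adj v u ∧ c u = i}
        = ↑(((Finset.univ.filter fun t : Fin s => d t % k = m1).image
              fun t => v + (d t : ZMod n)) ∪
            ((Finset.univ.filter fun t : Fin s => d t % k = m2).image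
              fun t => v - (d t : ZMod n))) := by
      ext u
      simp only [Set.mem_setOf_eq, Finset.coe_union, Set.mem_union, Finset.coe_image,
        Set.mem_image, Finset.mem_coe, Finset.mem_filter, Finset.mem_univ, true_and,
        circulantGraph_adj, Set.mem_range]
      constructor
      · rintro ⟨⟨hne, h | h⟩, hcu⟩
        · obtain ⟨t, ht⟩ := h
          have hu : u = v - (d t : ZMod n) := by rw [ht]; ring
          exact Or.inr ⟨t, (hcond2 t).mp (by rw [← hu]; exact hcu), hu.symm⟩
        · obtain ⟨t, ht⟩ := h
          have hu : u = v + (d t : ZMod n) := by rw [ht]; ring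
          exact Or.inl ⟨t, (hcond1 t).mp (by rw [← hu]; exact hcu), hu.symm⟩
      · rintro (⟨t, htm, rfl⟩ | ⟨t, htm, rfl⟩)
        · refine ⟨⟨?_, Or.inr ⟨t, by ring⟩⟩, (hcond1 t).mpr htm⟩
          intro h
          exact hDne t (left_eq_add.mp h)
        · refine ⟨⟨?_, Or.inl ⟨t, by ring⟩⟩, (hcond2 t).mpr htm⟩
          intro h
          apply hDne t
          linear_combination h
    rw [hset, Set.ncard_coe_finset, Finset.card_union_of_disjoint, Finset.card_image_of_injective _ hinj1,
      Finset.card_image_of_injective _ hinj2, hcard m1 hmi, hcard m2 hm2]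
    rw [Finset.disjoint_left]
    rintro u h1 h2
    simp only [Finset.mem_image, Finset.mem_filter, Finset.mem_univ, true_and] at h1 h2
    obtain ⟨t, _, ht⟩ := h1
    obtain ⟨t', _, ht'⟩ := h2
    apply hDneg t t'
    have h3 : v + (d t : ZMod n) = v - (d t' : ZMod n) := by rw [ht, ht']
    linear_combination h3
  rw [H i, H j]
end

section
/- Let k ≥ 2 and d ≥ 1 be integers. The Hamming graph H(d,k) admits a neighborhood-balanced k-coloring if and only if d ≡ 0 (mod k). -/
open SimpleGraph

/-- The Hamming graph `H(d,k)`: vertices are functions `Fin d → Fin k`, and two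
vertices are adjacent iff they differ in exactly one coordinate. -/
def hammingGraph (d k : ℕ) : SimpleGraph (Fin d → Fin k) where
  Adj x y := ∃! i, x i ≠ y i
  symm := by
    constructor
    rintro x y ⟨i, hi, hu⟩
    exact ⟨i, hi.symm, fun j hj => hu j hj.symm⟩
  loopless := by
    constructor
    rintro x ⟨i, hi, -⟩
    exact hi rfl

lemma ncard_setOf_eq_card_filter {α : Type*} [Fintype α] (p : α → Prop) [DecidablePred p] :
    {x | p x}.ncard = (Finset.univ.filter p).card := by
  classical
  rw [Set.ncard_eq_toFinset_card', Set.toFinset_setOf]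

lemma hamming_adj_iff {d k : ℕ} (v u : Fin d → Fin k) :
    (hammingGraph d k).Adj v u ↔ ∃ p a, a ≠ v p ∧ u = Function.update v p a := by
  constructor
  · rintro ⟨p, hp, hu⟩
    refine ⟨p, u p, fun h => hp h.symm, ?_⟩
    funext q
    by_cases hq : q = p
    · subst hq; simp
    · rw [Function.update_of_ne hq]
      by_contra h
      exact hq (hu q fun h' => h h'.symm)
  · rintro ⟨p, a, ha, rfl⟩
    refine ⟨p, by simpa using fun h => ha h.symm, ?_⟩
    intro q hq
    by_contra h
    rw [Function.update_of_ne h] at hq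
    exact hq rfl

lemma ncard_nbr_filter {d k : ℕ} (v : Fin d → Fin k) (P : (Fin d → Fin k) → Prop) :
    {u | (hammingGraph d k).Adj v u ∧ P u}.ncard
      = ∑ p : Fin d, {a : Fin k | a ≠ v p ∧ P (Function.update v p a)}.ncard := by
  classical
  rw [ncard_setOf_eq_card_filter]
  have hrw : Finset.univ.filter (fun u => (hammingGraph d k).Adj v u ∧ P u)
      = Finset.univ.biUnion (fun p : Fin d =>
          (Finset.univ.filter fun a : Fin k => a ≠ v p ∧ P (Function.update v p a)).image
            (Function.update v p)) := by
    ext u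
    rw [Finset.mem_filter, Finset.mem_biUnion]
    constructor
    · rintro ⟨-, hadj, hP⟩
      obtain ⟨p, a, ha, rfl⟩ := (hamming_adj_iff v u).mp hadj
      exact ⟨p, Finset.mem_univ p,
        Finset.mem_image.mpr ⟨a, Finset.mem_filter.mpr ⟨Finset.mem_univ a, ha, hP⟩, rfl⟩⟩
    · rintro ⟨p, -, hu⟩
      obtain ⟨a, haf, rfl⟩ := Finset.mem_image.mp hu
      obtain ⟨-, ha, hP⟩ := Finset.mem_filter.mp haf
      have hadj : (hammingGraph d k).Adj v (Function.update v p a) :=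
        (hamming_adj_iff v (Function.update v p a)).mpr ⟨p, a, ha, rfl⟩
      exact ⟨Finset.mem_univ _, hadj, hP⟩
  rw [hrw, Finset.card_biUnion]
  · refine Finset.sum_congr rfl fun p _ => ?_
    rw [Finset.card_image_of_injective _ (fun a b hab => by simpa using congrFun hab p)]
    rw [ncard_setOf_eq_card_filter]
  · intro p _ q _ hpq
    simp only [Finset.disjoint_left, Finset.mem_image, Finset.mem_filter]
    rintro u ⟨a, ⟨-, ha, -⟩, rfl⟩ ⟨b, ⟨-, hb, -⟩, hub⟩
    have h2 := congrFun hub q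
    rw [Function.update_self, Function.update_of_ne (Ne.symm hpq)] at h2
    exact hb h2

lemma card_filter_ne {k : ℕ} (b : Fin k) :
    (Finset.univ.filter fun a : Fin k => a ≠ b).card = k - 1 := by
  rw [Finset.filter_ne', Finset.card_erase_of_mem (Finset.mem_univ b), Finset.card_univ,
    Fintype.card_fin]

lemma card_filter_val_lt {d m : ℕ} (h : m ≤ d) :
    (Finset.univ.filter fun q : Fin d => (q : ℕ) < m).card = m := by
  have h2 : (Finset.univ.filter fun q : Fin d => (q : ℕ) < m).card = (Finset.range m).card := by
    refine Finset.card_bij (fun q _ => (q : ℕ)) ?_ ?_ ?_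
    · intro q hq
      simpa using (Finset.mem_filter.mp hq).2
    · intro a _ b _ hab
      exact Fin.val_injective hab
    · intro j hj
      exact ⟨⟨j, lt_of_lt_of_le (Finset.mem_range.mp hj) h⟩,
        Finset.mem_filter.mpr ⟨Finset.mem_univ _, Finset.mem_range.mp hj⟩, rfl⟩
  rw [h2, Finset.card_range]

theorem stmt_17 (d k : ℕ) (hd : 1 ≤ d) (hk : 2 ≤ k) :
    (∃ c : (Fin d → Fin k) → Fin k, IsNBC (hammingGraph d k) k c) ↔ k ∣ d := by
  classical
  obtain ⟨n, rfl⟩ : ∃ n, k = n + 2 := ⟨k - 2, by omega⟩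
  have hco : Nat.Coprime (n + 2) (n + 1) := by
    have h : Nat.Coprime (1 + (n + 1)) (n + 1) :=
      Nat.coprime_add_self_left.mpr (Nat.coprime_one_left _)
    rwa [show 1 + (n + 1) = n + 2 by omega] at h
  constructor
  · rintro ⟨c, hc⟩
    set v : Fin d → Fin (n + 2) := fun _ => 0 with hv
    set t : ℕ := {u | (hammingGraph d (n + 2)).Adj v u ∧ c u = 0}.ncard with ht
    have hsum : ∑ i : Fin (n + 2), {u | (hammingGraph d (n + 2)).Adj v u ∧ c u = i}.ncard
        = (n + 2) * t := by
      rw [Finset.sum_congr rfl fun i _ => hc v i 0]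
      simp [ht, mul_comm]
    have hsum2 : ∑ i : Fin (n + 2), {u | (hammingGraph d (n + 2)).Adj v u ∧ c u = i}.ncard
        = d * (n + 1) := by
      have key : ∀ i : Fin (n + 2), {u | (hammingGraph d (n + 2)).Adj v u ∧ c u = i}.ncard
          = ∑ p : Fin d, {a : Fin (n + 2) | a ≠ v p ∧ c (Function.update v p a) = i}.ncard :=
        fun i => ncard_nbr_filter v (fun u => c u = i)
      rw [Finset.sum_congr rfl fun i _ => key i, Finset.sum_comm]
      have hp : ∀ p : Fin d, ∑ i : Fin (n + 2),
          {a : Fin (n + 2) | a ≠ v p ∧ c (Function.update v p a) = i}.ncard = n + 1 := by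
        intro p
        have hfib := Finset.card_eq_sum_card_fiberwise
          (f := fun a : Fin (n + 2) => c (Function.update v p a))
          (s := Finset.univ.filter fun a : Fin (n + 2) => a ≠ v p) (t := Finset.univ)
          (fun x _ => Finset.mem_univ _)
        simp only [Finset.filter_filter] at hfib
        rw [card_filter_ne (v p)] at hfib
        simp only [ncard_setOf_eq_card_filter]
        rw [← hfib]
        omega
      rw [Finset.sum_congr rfl fun p _ => hp p]
      simp [mul_comm]
    have hdvd : (n + 2) ∣ d * (n + 1) := ⟨t, hsum2.symm.trans hsum⟩
    exact hco.dvd_of_dvd_mul_right hdvd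
  · rintro ⟨m, rfl⟩
    set W : Finset (Fin ((n + 2) * m)) := Finset.univ.filter fun q => ¬ (q : ℕ) < m with hW
    refine ⟨fun x => ∑ q ∈ W, x q, ?_⟩
    set c : (Fin ((n + 2) * m) → Fin (n + 2)) → Fin (n + 2) := fun x => ∑ q ∈ W, x q with hcdef
    have hm_le : m ≤ (n + 2) * m := Nat.le_mul_of_pos_left m (by omega)
    have key : ∀ (v : Fin ((n + 2) * m) → Fin (n + 2)) (i : Fin (n + 2)),
        {u | (hammingGraph ((n + 2) * m) (n + 2)).Adj v u ∧ c u = i}.ncard = m * (n + 1) := by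
      intro v i
      rw [ncard_nbr_filter v (fun u => c u = i)]
      simp only [ncard_setOf_eq_card_filter]
      rw [← Finset.sum_filter_add_sum_filter_not Finset.univ
        (fun p : Fin ((n + 2) * m) => (p : ℕ) < m)]
      have hzero : ∀ p ∈ Finset.univ.filter (fun p : Fin ((n + 2) * m) => (p : ℕ) < m),
          (Finset.univ.filter fun a : Fin (n + 2) =>
            a ≠ v p ∧ c (Function.update v p a) = i).card
          = if c v = i then n + 1 else 0 := by
        intro p hp
        have hpW : p ∉ W := by
          simp only [hW, Finset.mem_filter, Finset.mem_univ, true_and, not_not]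
          exact (Finset.mem_filter.mp hp).2
        have hcu : ∀ a : Fin (n + 2), c (Function.update v p a) = c v := by
          intro a
          show ∑ q ∈ W, Function.update v p a q = ∑ q ∈ W, v q
          refine Finset.sum_congr rfl fun q hq => ?_
          refine Function.update_of_ne (fun h : q = p => hpW ?_) a v
          rw [← h]
          exact hq
        split_ifs with h
        · have hfe : (Finset.univ.filter fun a : Fin (n + 2) =>
              a ≠ v p ∧ c (Function.update v p a) = i)
              = Finset.univ.filter fun a : Fin (n + 2) => a ≠ v p := by
            ext a
            simp [hcu, h]
          rw [hfe, card_filter_ne (v p)]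
          omega
        · rw [Finset.card_eq_zero]
          ext a
          simp [hcu, h]
      have hone : ∀ p ∈ Finset.univ.filter (fun p : Fin ((n + 2) * m) => ¬ (p : ℕ) < m),
          (Finset.univ.filter fun a : Fin (n + 2) =>
            a ≠ v p ∧ c (Function.update v p a) = i).card
          = if c v = i then 0 else 1 := by
        intro p hp
        have hpW : p ∈ W := by
          simp only [hW, Finset.mem_filter, Finset.mem_univ, true_and]
          exact (Finset.mem_filter.mp hp).2
        set s : Fin (n + 2) := ∑ q ∈ W.erase p, v q with hs
        have hcv : c v = v p + s := by
          show ∑ q ∈ W, v q = v p + s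
          exact (Finset.add_sum_erase W v hpW).symm
        have hcu : ∀ a : Fin (n + 2), c (Function.update v p a) = a + s := by
          intro a
          show ∑ q ∈ W, Function.update v p a q = a + s
          rw [← Finset.add_sum_erase W _ hpW, Function.update_self]
          congr 1
          exact Finset.sum_congr rfl fun q hq =>
            Function.update_of_ne (Finset.ne_of_mem_erase hq) a v
        split_ifs with h
        · rw [Finset.card_eq_zero]
          ext a
          simp only [Finset.mem_filter, Finset.mem_univ, true_and, Finset.notMem_empty,
            iff_false, not_and]
          intro ha hai
          rw [hcu] at hai
          apply ha
          have h2 : a + s = v p + s := by rw [hai, ← h, hcv]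
          exact add_right_cancel h2
        · have hset : (Finset.univ.filter fun a : Fin (n + 2) =>
              a ≠ v p ∧ c (Function.update v p a) = i) = {i - s} := by
            ext a
            simp only [Finset.mem_filter, Finset.mem_univ, true_and, Finset.mem_singleton, hcu]
            constructor
            · rintro ⟨-, hai⟩
              exact eq_sub_iff_add_eq.mpr hai
            · rintro rfl
              refine ⟨fun hne => h ?_, sub_add_cancel i s⟩
              rw [hcv, ← hne]
              exact sub_add_cancel i s
          rw [hset, Finset.card_singleton]
      rw [Finset.sum_congr rfl hzero, Finset.sum_congr rfl hone, Finset.sum_const,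
        Finset.sum_const, card_filter_val_lt hm_le]
      have hcard2 : (Finset.univ.filter fun p : Fin ((n + 2) * m) => ¬ (p : ℕ) < m).card
          = (n + 1) * m := by
        have h3 := Finset.card_filter_add_card_filter_not
          (s := (Finset.univ : Finset (Fin ((n + 2) * m))))
          (fun p : Fin ((n + 2) * m) => (p : ℕ) < m)
        rw [card_filter_val_lt hm_le, Finset.card_univ, Fintype.card_fin] at h3
        have h4 : (n + 2) * m = m + (n + 1) * m := by ring
        omega
      rw [hcard2]
      split_ifs <;> simp [smul_eq_mul, mul_comm]
    intro v i j
    rw [key v i, key v j]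
end

section
/- For every integer d ≥ 1, the hypercube graph Q_d admits a neighborhood-balanced 2-coloring if and only if d is even. -/
open SimpleGraph

/-- The hypercube graph `Q_d`: vertices are functions `Fin d → Fin 2`, and two
vertices are adjacent iff they differ in exactly one coordinate. -/
def hypercubeGraph (d : ℕ) : SimpleGraph (Fin d → Fin 2) where
  Adj x y := ∃! i, x i ≠ y i
  symm := by
    constructor
    rintro x y ⟨i, hi, hu⟩
    exact ⟨i, hi.symm, fun j hj => hu j hj.symm⟩
  loopless := by
    constructor
    rintro x ⟨i, hi, -⟩
    exact hi rfl

/-- flp coordinate i -/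
def flp {d : ℕ} (v : Fin d → Fin 2) (i : Fin d) : Fin d → Fin 2 :=
  Function.update v i (v i + 1)

lemma fin2_add_one_ne : ∀ a : Fin 2, a + 1 ≠ a := by decide

lemma fin2_ne_iff : ∀ {a b : Fin 2}, a ≠ b ↔ b = a + 1 := by decide

lemma flip_apply_self {d : ℕ} (v : Fin d → Fin 2) (i : Fin d) : flp v i i = v i + 1 := by
  simp [flp]

lemma flip_apply_ne {d : ℕ} (v : Fin d → Fin 2) {i j : Fin d} (h : j ≠ i) :
    flp v i j = v j := by
  simp [flp, Function.update_of_ne h]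

lemma adj_iff {d : ℕ} (v u : Fin d → Fin 2) :
    (hypercubeGraph d).Adj v u ↔ ∃ i, u = flp v i := by
  constructor
  · rintro ⟨i, hi, hu⟩
    refine ⟨i, funext fun k => ?_⟩
    by_cases hk : k = i
    · subst hk
      rw [flip_apply_self]
      exact fin2_ne_iff.mp hi
    · rw [flip_apply_ne v hk]
      by_contra h
      exact hk (hu k (Ne.symm h))
  · rintro ⟨i, rfl⟩
    refine ⟨i, ?_, fun k hk => ?_⟩
    · show v i ≠ flp v i i
      rw [flip_apply_self]; exact (fin2_add_one_ne (v i)).symm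
    · by_contra h
      exact hk (flip_apply_ne v h).symm

lemma flip_injective {d : ℕ} (v : Fin d → Fin 2) : Function.Injective (flp v) := by
  intro i j h
  by_contra hij
  have h1 : flp v i i = flp v j i := by rw [h]
  rw [flip_apply_self, flip_apply_ne v hij] at h1
  exact fin2_add_one_ne (v i) h1

lemma set_eq {d : ℕ} (v : Fin d → Fin 2) (c : (Fin d → Fin 2) → Fin 2) (j : Fin 2) :
    {u | (hypercubeGraph d).Adj v u ∧ c u = j} = flp v '' {i | c (flp v i) = j} := by
  ext u
  simp only [Set.mem_setOf_eq, Set.mem_image, adj_iff]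
  constructor
  · rintro ⟨⟨i, rfl⟩, hc⟩
    exact ⟨i, hc, rfl⟩
  · rintro ⟨i, hc, rfl⟩
    exact ⟨⟨i, rfl⟩, hc⟩

lemma ncard_set {d : ℕ} (v : Fin d → Fin 2) (c : (Fin d → Fin 2) → Fin 2) (j : Fin 2) :
    {u | (hypercubeGraph d).Adj v u ∧ c u = j}.ncard = {i | c (flp v i) = j}.ncard := by
  rw [set_eq, Set.ncard_image_of_injective _ (flip_injective v)]

/-- the coloring -/
def col {d : ℕ} (x : Fin d → Fin 2) : Fin 2 :=
  ∑ i : Fin d, if (i : ℕ) < d / 2 then x i else 0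

lemma col_flip {d : ℕ} (v : Fin d → Fin 2) (i : Fin d) :
    col (flp v i) = col v + (if (i : ℕ) < d / 2 then 1 else 0) := by
  unfold col
  rw [← Finset.sum_erase_add _ _ (Finset.mem_univ i),
    ← Finset.sum_erase_add Finset.univ (fun k : Fin d => if (k : ℕ) < d / 2 then v k else 0)
      (Finset.mem_univ i)]
  have h1 : ∑ k ∈ Finset.univ.erase i, (if (k : ℕ) < d / 2 then flp v i k else 0) =
      ∑ k ∈ Finset.univ.erase i, (if (k : ℕ) < d / 2 then v k else 0) :=
    Finset.sum_congr rfl fun k hk => by rw [flip_apply_ne v (Finset.ne_of_mem_erase hk)]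
  rw [h1, flip_apply_self]
  split_ifs <;> abel

lemma card_lt_half {d : ℕ} (hd : 1 ≤ d) :
    {i : Fin d | (i : ℕ) < d / 2}.ncard = d / 2 := by
  have hlt : d / 2 < d := Nat.div_lt_self hd (by norm_num)
  have : {i : Fin d | (i : ℕ) < d / 2} = Set.Iio (⟨d / 2, hlt⟩ : Fin d) := by
    ext i; simp [Fin.lt_def]
  rw [this]
  have : (Set.Iio (⟨d / 2, hlt⟩ : Fin d)).ncard = Nat.card (Set.Iio (⟨d / 2, hlt⟩ : Fin d)) := rfl
  rw [this, Nat.card_eq_fintype_card, Fintype.card_Iio, Fin.card_Iio]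

lemma fin2_cases : ∀ a : Fin 2, a = 0 ∨ a = 1 := by decide

lemma fin2_eq_or : ∀ a j : Fin 2, j = a ∨ j = a + 1 := by decide

lemma key_card {d : ℕ} (hd : 1 ≤ d) (hev : Even d) (v : Fin d → Fin 2) (j : Fin 2) :
    {i : Fin d | col (flp v i) = j}.ncard = d / 2 := by
  set A : Set (Fin d) := {i | (i : ℕ) < d / 2} with hA
  have hcardA : A.ncard = d / 2 := card_lt_half hd
  have hcardAc : Aᶜ.ncard = d / 2 := by
    have h1 : A.ncard + Aᶜ.ncard = d := by
      rw [Set.ncard_add_ncard_compl, Nat.card_eq_fintype_card, Fintype.card_fin]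
    obtain ⟨m, hm⟩ := hev
    omega
  rcases fin2_eq_or (col v) j with rfl | rfl
  · have hs : {i : Fin d | col (flp v i) = col v} = Aᶜ := by
      ext i
      simp only [Set.mem_setOf_eq, Set.mem_compl_iff, hA, col_flip]
      by_cases h : (i : ℕ) < d / 2
      · simp [h, fin2_add_one_ne]
      · simp [h]
    rw [hs, hcardAc]
  · have hs : {i : Fin d | col (flp v i) = col v + 1} = A := by
      ext i
      simp only [Set.mem_setOf_eq, hA, col_flip]
      by_cases h : (i : ℕ) < d / 2
      · simp [h]
      · simp [h, (fin2_add_one_ne (col v)).symm]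
    rw [hs, hcardA]


theorem stmt_18 (d : ℕ) (hd : 1 ≤ d) :
    (∃ c : (Fin d → Fin 2) → Fin 2, IsNBC (hypercubeGraph d) 2 c) ↔ Even d := by
  constructor
  · rintro ⟨c, hc⟩
    set v : Fin d → Fin 2 := fun _ => 0 with hv
    have hunion : {u | (hypercubeGraph d).Adj v u} =
        {u | (hypercubeGraph d).Adj v u ∧ c u = 0} ∪ {u | (hypercubeGraph d).Adj v u ∧ c u = 1} := by
      ext u
      simp only [Set.mem_setOf_eq, Set.mem_union]
      constructor
      · intro h
        rcases fin2_cases (c u) with h0 | h1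
        · exact Or.inl ⟨h, h0⟩
        · exact Or.inr ⟨h, h1⟩
      · rintro (⟨h, -⟩ | ⟨h, -⟩) <;> exact h
    have hdisj : Disjoint {u | (hypercubeGraph d).Adj v u ∧ c u = 0}
        {u | (hypercubeGraph d).Adj v u ∧ c u = 1} := by
      rw [Set.disjoint_left]
      rintro u ⟨-, h0⟩ ⟨-, h1⟩
      rw [h0] at h1
      exact absurd h1 (by decide)
    have hcard : {u | (hypercubeGraph d).Adj v u}.ncard = d := by
      have : {u | (hypercubeGraph d).Adj v u} = flp v '' Set.univ := by
        ext u
        simp [adj_iff, eq_comm]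
      rw [this, Set.ncard_image_of_injective _ (flip_injective v), Set.ncard_univ,
        Nat.card_eq_fintype_card, Fintype.card_fin]
    rw [hunion, Set.ncard_union_eq hdisj (Set.toFinite _) (Set.toFinite _), hc v 1 0] at hcard
    exact ⟨_, hcard.symm⟩
  · intro hev
    refine ⟨col, fun v i j => ?_⟩
    rw [ncard_set, ncard_set, key_card hd hev v i, key_card hd hev v j]
end

section
/- Let k ≥ 2 be an integer. Every finite simple graph G is an induced subgraph of some finite simple graph H that admits a neighborhood-balanced k-coloring; that is, there exist a finite simple graph H admitting a neighborhood-balanced k-coloring and a graph embedding of G into H (an injective map on vertices that preserves both adjacency and non-adjacency). -/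
open SimpleGraph

theorem stmt_19 {V : Type*} [Fintype V] (G : SimpleGraph V) (k : ℕ) (hk : 2 ≤ k) :
    ∃ (W : Type) (_ : Fintype W) (H : SimpleGraph W) (c : W → Fin k),
      IsNBC H k c ∧ Nonempty (G ↪g H) := by
  classical
  obtain ⟨n, ⟨e⟩⟩ : ∃ n, Nonempty (V ≃ Fin n) := ⟨Fintype.card V, ⟨Fintype.equivFin V⟩⟩
  refine ⟨Fin n × Fin k, inferInstance, G.comap (fun p => e.symm p.1), Prod.snd, ?_, ?_⟩
  · intro v i j
    have key : ∀ m : Fin k,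
        {u : Fin n × Fin k | G.Adj (e.symm v.1) (e.symm u.1) ∧ u.2 = m}.ncard
          = {w : Fin n | G.Adj (e.symm v.1) (e.symm w)}.ncard := by
      intro m
      have : {u : Fin n × Fin k | G.Adj (e.symm v.1) (e.symm u.1) ∧ u.2 = m}
          = (fun w => (w, m)) '' {w : Fin n | G.Adj (e.symm v.1) (e.symm w)} := by
        ext ⟨a, b⟩
        simp only [Set.mem_setOf_eq, Set.mem_image]
        constructor
        · rintro ⟨h, rfl⟩; exact ⟨a, h, rfl⟩
        · rintro ⟨w, hw, h⟩
          obtain ⟨rfl, rfl⟩ := Prod.mk.injEq .. ▸ h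
          exact ⟨hw, rfl⟩
      rw [this, Set.ncard_image_of_injective _ (fun a b h => (Prod.mk.injEq ..).mp h |>.1)]
    simp only [comap_adj]
    rw [key i, key j]
  · refine ⟨⟨⟨fun v => (e v, ⟨0, by omega⟩), ?_⟩, ?_⟩⟩
    · intro a b h
      exact e.injective (Prod.mk.injEq .. ▸ h).1
    · intro a b
      show G.Adj (e.symm (e a)) (e.symm (e b)) ↔ G.Adj a b
      simp [comap_adj]
end
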